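/- Let m ≥ 1, p_1,…,p_m ∈ [1,∞) with 1/p = Σ_{k=1}^m 1/p_k, and suppose each weight w_k satisfies the A_{p_k} condition with constant C_k: for every ball B, (|B|^{−1}∫_B w_k)^{1/p_k}·(|B|^{−1}∫_B w_k^{−p_k′/p_k})^{1/p_k′} ≤ C_k when p_k > 1 (with w_k^{−p_k′/p_k} locally integrable), and |B|^{−1}∫_B w_k ≤ C_k · essinf_B w_k when p_k = 1. Then the tuple (w_1,…,w_m) satisfies the multilinear A_{P⃗} condition with constant Π_{k=1}^m C_k: for every ball B, (|B|^{−1}∫_B ν)^{1/p} · Π_{k=1}^m D_k ≤ Π_{k=1}^m C_k, where ν = Π_k w_k^{p/p_k}, D_k = (|B|^{−1}∫_B w_k^{−p_k′/p_k})^{1/p_k′} if p_k > 1 and D_k = (essinf_B w_k)^{−1} if p_k = 1. -/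

import Mathlib

open MeasureTheory Metric ENNReal

noncomputable section

/-- Euclidean space `ℝ^n`. -/
abbrev Rn (n : ℕ) : Type := EuclideanSpace ℝ (Fin n)

/-- A weight on `ℝ^n`: a measurable, everywhere positive, locally integrable function. -/
def IsWeight {n : ℕ} (w : Rn n → ℝ) : Prop :=
  Measurable w ∧ (∀ x, 0 < w x) ∧ LocallyIntegrable w volume

/-- The weighted measure `w(E) = ∫_E w` of a set `E`, as an extended nonnegative real. -/
def wtMass {n : ℕ} (w : Rn n → ℝ) (E : Set (Rn n)) : ℝ≥0∞ :=
  ∫⁻ x in E, ENNReal.ofReal (w x)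

/-- The weighted `L^p` norm of `f` restricted to a set `E`:
`(∫_E |f|^p w)^(1/p)`. -/
def wtLpOn {n : ℕ} (p : ℝ) (w : Rn n → ℝ) (E : Set (Rn n)) (f : Rn n → ℝ) : ℝ≥0∞ :=
  (∫⁻ x in E, ENNReal.ofReal |f x| ^ p * ENNReal.ofReal (w x)) ^ (1 / p)

/-- The weighted `L^p` norm `‖f‖_{L^p(w)}` on all of `ℝ^n`. -/
def wtLp {n : ℕ} (p : ℝ) (w : Rn n → ℝ) (f : Rn n → ℝ) : ℝ≥0∞ :=
  wtLpOn p w Set.univ f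

/-- The weighted weak `L^p` quasinorm of `f` restricted to a set `E`:
`sup_{t>0} t · w({x ∈ E : |f x| > t})^(1/p)`. -/
def wtWLpOn {n : ℕ} (p : ℝ) (w : Rn n → ℝ) (E : Set (Rn n)) (f : Rn n → ℝ) : ℝ≥0∞ :=
  ⨆ (t : ℝ) (_ : 0 < t), ENNReal.ofReal t * wtMass w {x ∈ E | t < |f x|} ^ (1 / p)

/-- The weighted weak `L^p` quasinorm `‖f‖_{WL^p(w)}` on all of `ℝ^n`. -/
def wtWLp {n : ℕ} (p : ℝ) (w : Rn n → ℝ) (f : Rn n → ℝ) : ℝ≥0∞ :=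
  wtWLpOn p w Set.univ f

/-- The weighted amalgam norm `‖f‖_{(L^p,L^q)^α(w;μ)}`. -/
def amalgamNorm {n : ℕ} (p q α : ℝ) (w μ : Rn n → ℝ) (f : Rn n → ℝ) : ℝ≥0∞ :=
  ⨆ (r : ℝ) (_ : 0 < r),
    (∫⁻ y, (wtMass w (ball y r) ^ (1/α - 1/p - 1/q) * wtLpOn p w (ball y r) f) ^ q *
      ENNReal.ofReal (μ y)) ^ (1/q)

/-- The weighted weak amalgam norm `‖f‖_{(WL^p,L^q)^α(w;μ)}`. -/
def wAmalgamNorm {n : ℕ} (p q α : ℝ) (w μ : Rn n → ℝ) (f : Rn n → ℝ) : ℝ≥0∞ :=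
  ⨆ (r : ℝ) (_ : 0 < r),
    (∫⁻ y, (wtMass w (ball y r) ^ (1/α - 1/p - 1/q) * wtWLpOn p w (ball y r) f) ^ q *
      ENNReal.ofReal (μ y)) ^ (1/q)

/-- The product weight `ν_{w⃗} = ∏_k w_k^{p/p_k}`. -/
def nuW {n m : ℕ} (p : ℝ) (pk : Fin m → ℝ) (w : Fin m → Rn n → ℝ) : Rn n → ℝ :=
  fun x => ∏ k, w k x ^ (p / pk k)

/-- The `k`-th factor in the multilinear `A_{P⃗}` condition on a set `B`:
`(|B|⁻¹ ∫_B w^{-p'/p})^{1/p'}` when `p > 1` (note `p'/p = 1/(p-1)` and `1/p' = (p-1)/p`),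
and `(essinf_B w)⁻¹` when `p = 1`. -/
def apFactor {n : ℕ} (pk : ℝ) (w : Rn n → ℝ) (B : Set (Rn n)) : ℝ≥0∞ :=
  if pk = 1 then (essInf (fun x => ENNReal.ofReal (w x)) (volume.restrict B))⁻¹
  else ((volume B)⁻¹ * ∫⁻ x in B, ENNReal.ofReal (w x ^ (-(1 / (pk - 1))))) ^ ((pk - 1) / pk)

/-- The multilinear `A_{P⃗}` condition with constant `CW`. -/
def MultiAP {n m : ℕ} (p : ℝ) (pk : Fin m → ℝ) (w : Fin m → Rn n → ℝ) (CW : ℝ) : Prop :=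
  ∀ (y : Rn n) (r : ℝ), 0 < r →
    ((volume (ball y r))⁻¹ * wtMass (nuW p pk w) (ball y r)) ^ (1/p) *
      (∏ k, apFactor (pk k) (w k) (ball y r)) ≤ ENNReal.ofReal CW

/-- The `A_∞`-comparison condition with constants `Cc`, `δ`. -/
def AinfCompare {n : ℕ} (w : Rn n → ℝ) (Cc δ : ℝ) : Prop :=
  ∀ (y : Rn n) (r : ℝ), 0 < r → ∀ E : Set (Rn n), MeasurableSet E → E ⊆ ball y r →
    wtMass w E ≤ ENNReal.ofReal Cc * (volume E / volume (ball y r)) ^ δ * wtMass w (ball y r)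

/-- Doubling condition with constant `Cd`. -/
def DoublingWt {n : ℕ} (w : Rn n → ℝ) (Cd : ℝ) : Prop :=
  ∀ (y : Rn n) (r : ℝ), 0 < r →
    wtMass w (ball y (2*r)) ≤ ENNReal.ofReal Cd * wtMass w (ball y r)

/-- Reverse Jensen inequality with constant `CJ`. -/
def RevJensen {n : ℕ} (w : Rn n → ℝ) (CJ : ℝ) : Prop :=
  LocallyIntegrable (fun x => Real.log (w x)) volume ∧
  ∀ (y : Rn n) (r : ℝ), 0 < r →
    (∫ x in ball y r, w x) ≤
      CJ * (volume (ball y r)).toReal *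
        Real.exp ((volume (ball y r)).toReal⁻¹ * ∫ x in ball y r, Real.log (w x))

/-- `T` is a.e. `m`-linear. -/
def AEMultilinear {n m : ℕ} (T : (Fin m → Rn n → ℝ) → Rn n → ℝ) : Prop :=
  ∀ g : Fin m → Rn n → ℝ, (∀ k, Measurable (g k)) →
    ∀ (k : Fin m) (c : ℝ) (h : Rn n → ℝ), Measurable h →
      ∀ᵐ x ∂(volume : Measure (Rn n)),
        T (Function.update g k (fun y => c * g k y + h y)) x =
          c * T g x + T (Function.update g k h) x

/-- The complement of the essential support of `g`: the union of all open sets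
on which `g` vanishes almost everywhere. -/
def essSuppCompl {n : ℕ} (g : Rn n → ℝ) : Set (Rn n) :=
  {x | ∃ U : Set (Rn n), IsOpen U ∧ x ∈ U ∧ ∀ᵐ y ∂(volume.restrict U), g y = 0}

/-- The multilinear size property with constant `A`: for a.e. `x` outside the essential
support of one of the entries, `|T(g⃗)(x)|` is dominated by the standard multilinear
fractional kernel applied to `|g_k|`. -/
def SizeProp {n m : ℕ} (T : (Fin m → Rn n → ℝ) → Rn n → ℝ) (A : ℝ) : Prop :=
  ∀ g : Fin m → Rn n → ℝ, (∀ k, Measurable (g k)) → ∀ k₀ : Fin m,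
    ∀ᵐ x ∂(volume.restrict (essSuppCompl (g k₀))),
      ENNReal.ofReal |T g x| ≤ ENNReal.ofReal A *
        ∫⁻ z : Fin m → Rn n,
          (∏ k, ENNReal.ofReal |g k (z k)|) /
            ENNReal.ofReal ((∑ k, dist x (z k)) ^ (m * n))

/-- `b_B`: the average of `b` over the ball `B(y,r)`. -/
def ballAvg {n : ℕ} (b : Rn n → ℝ) (y : Rn n) (r : ℝ) : ℝ :=
  (volume (ball y r)).toReal⁻¹ * ∫ x in ball y r, b x

/-- The BMO seminorm of `b` is bounded by `M`. -/
def BMOBound {n : ℕ} (b : Rn n → ℝ) (M : ℝ) : Prop :=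
  ∀ (y : Rn n) (r : ℝ), 0 < r →
    (volume (ball y r)).toReal⁻¹ * (∫ x in ball y r, |b x - ballAvg b y r|) ≤ M

/-- The commutator `[b,T]_k` in the `k`-th slot. -/
def commAt {n m : ℕ} (b : Rn n → ℝ) (k : Fin m)
    (T : (Fin m → Rn n → ℝ) → Rn n → ℝ) : (Fin m → Rn n → ℝ) → Rn n → ℝ :=
  fun f x => b x * T f x - T (Function.update f k (fun y => b y * f k y)) x

/-- The multilinear commutator `[Σb⃗, T] = Σ_k [b_k,T]_k`. -/
def sumComm {n m : ℕ} (b : Fin m → Rn n → ℝ)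
    (T : (Fin m → Rn n → ℝ) → Rn n → ℝ) : (Fin m → Rn n → ℝ) → Rn n → ℝ :=
  fun f x => ∑ k, commAt (b k) k T f x

/-- The iterated commutator `[Πb⃗, T] = [b_1,[b_2,…[b_{m-1},[b_m,T]_m]_{m-1}…]_2]_1`. -/
def iterComm {n m : ℕ} (b : Fin m → Rn n → ℝ)
    (T : (Fin m → Rn n → ℝ) → Rn n → ℝ) : (Fin m → Rn n → ℝ) → Rn n → ℝ :=
  (List.finRange m).foldr (fun k S => commAt (b k) k S) T

/-- `Φ(t) = t(1 + log⁺ t)`. -/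
def phiLL (t : ℝ) : ℝ := t * (1 + max (Real.log t) 0)

/-- The `L log L` Luxemburg norm of `f` over `B` with respect to the weight `w`:
`inf {σ > 0 : w(B)⁻¹ ∫_B Φ(|f|/σ) w ≤ 1}` (equal to `⊤` if no such `σ` exists). -/
def llogLOn {n : ℕ} (w : Rn n → ℝ) (B : Set (Rn n)) (f : Rn n → ℝ) : ℝ≥0∞ :=
  sInf {σ : ℝ≥0∞ | ∃ s : ℝ, 0 < s ∧ σ = ENNReal.ofReal s ∧
    (wtMass w B)⁻¹ *
      (∫⁻ x in B, ENNReal.ofReal (phiLL (|f x| / s)) * ENNReal.ofReal (w x)) ≤ 1}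

/-- The weighted amalgam norm of `L log L` type, `‖f‖_{(L log L, L^q)^α(w;μ)}`. -/
def llogLAmalgam {n : ℕ} (q α : ℝ) (w μ : Rn n → ℝ) (f : Rn n → ℝ) : ℝ≥0∞ :=
  ⨆ (r : ℝ) (_ : 0 < r),
    (∫⁻ y, (wtMass w (ball y r) ^ (1/α - 1/q) * llogLOn w (ball y r) f) ^ q *
      ENNReal.ofReal (μ y)) ^ (1/q)

/-- Reverse Hölder inequality with exponent `s` and constant `CR`. -/
def RevHolder {n : ℕ} (w : Rn n → ℝ) (s CR : ℝ) : Prop :=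
  ∀ (y : Rn n) (r : ℝ), 0 < r →
    ((volume (ball y r))⁻¹ * ∫⁻ x in ball y r, ENNReal.ofReal (w x ^ s)) ^ (1/s) ≤
      ENNReal.ofReal CR * ((volume (ball y r))⁻¹ * wtMass w (ball y r))

private lemma ennreal_rpow_finset_sum {ι : Type*} (s : Finset ι) {x : ℝ≥0∞}
    (hx : x ≠ 0) (hx' : x ≠ ⊤) (f : ι → ℝ) :
    x ^ (∑ i ∈ s, f i) = ∏ i ∈ s, x ^ f i := by
  classical
  induction s using Finset.induction with
  | empty => simp
  | @insert i s hi ih =>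
    rw [Finset.sum_insert hi, Finset.prod_insert hi, ENNReal.rpow_add _ _ hx hx', ih]

/-- if each `w_k ∈ A_{p_k}` with constant `C_k`, then `(w_1,…,w_m)` satisfies
the multilinear `A_{P⃗}` condition with constant `∏_k C_k`. -/
theorem product_Ap_implies_multiAP
    {n m : ℕ} (hm : 1 ≤ m) (p : ℝ) (pk : Fin m → ℝ) (hpk : ∀ k, 1 ≤ pk k)
    (hp : 1/p = ∑ k, 1/pk k)
    (w : Fin m → Rn n → ℝ) (hw : ∀ k, IsWeight (w k))
    (hwdual : ∀ k, pk k > 1 → LocallyIntegrable (fun x => w k x ^ (-(1/(pk k - 1)))) volume)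
    (Ck : Fin m → ℝ)
    (hAk : ∀ k, ∀ (y : Rn n) (r : ℝ), 0 < r →
      if pk k = 1 then
        (volume (ball y r))⁻¹ * wtMass (w k) (ball y r) ≤
          ENNReal.ofReal (Ck k) *
            essInf (fun x => ENNReal.ofReal (w k x)) (volume.restrict (ball y r))
      else
        ((volume (ball y r))⁻¹ * wtMass (w k) (ball y r)) ^ (1/pk k) *
          apFactor (pk k) (w k) (ball y r) ≤ ENNReal.ofReal (Ck k)) :
    ∀ (y : Rn n) (r : ℝ), 0 < r →
      ((volume (ball y r))⁻¹ * wtMass (nuW p pk w) (ball y r)) ^ (1/p) *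
        (∏ k, apFactor (pk k) (w k) (ball y r)) ≤ ENNReal.ofReal (∏ k, Ck k) := by
  intro y r hr
  classical
  have hpk0 : ∀ k, 0 < pk k := fun k => lt_of_lt_of_le one_pos (hpk k)
  have hppos : 0 < p := by
    have hsum : 0 < ∑ k, 1 / pk k := by
      have : Nonempty (Fin m) := Fin.pos_iff_nonempty.mp hm
      exact Finset.sum_pos (fun k _ => one_div_pos.mpr (hpk0 k)) Finset.univ_nonempty
    rw [← hp] at hsum
    exact (one_div_pos).mp hsum
  set B := ball y r with hB
  have hvol_pos : 0 < volume B := measure_ball_pos _ _ hr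
  have hvol_lt : volume B < ⊤ := measure_ball_lt_top
  have hinv_ne0 : (volume B)⁻¹ ≠ 0 := by simp [hvol_lt.ne]
  have hinv_netop : (volume B)⁻¹ ≠ ⊤ := by simp [hvol_pos.ne']
  set θ : Fin m → ℝ := fun k => p / pk k with hθ
  have hθ0 : ∀ k, 0 ≤ θ k := fun k => div_nonneg hppos.le (hpk0 k).le
  have hθsum : ∑ k, θ k = 1 := by
    have : ∑ k, θ k = p * ∑ k, 1 / pk k := by
      rw [Finset.mul_sum]; exact Finset.sum_congr rfl fun k _ => by
        field_simp
        rfl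
    rw [this, ← hp]
    field_simp
  -- Hölder
  have hHolder : wtMass (nuW p pk w) B ≤ ∏ k, (wtMass (w k) B) ^ θ k := by
    have heq : ∀ x, ENNReal.ofReal (nuW p pk w x) =
        ∏ k, (ENNReal.ofReal (w k x)) ^ θ k := by
      intro x
      rw [nuW, ENNReal.ofReal_prod_of_nonneg (fun k _ =>
        Real.rpow_nonneg ((hw k).2.1 x).le _)]
      exact Finset.prod_congr rfl fun k _ =>
        (ENNReal.ofReal_rpow_of_pos ((hw k).2.1 x)).symm
    calc wtMass (nuW p pk w) B
        = ∫⁻ x in B, ∏ k, (ENNReal.ofReal (w k x)) ^ θ k := by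
          unfold wtMass; exact lintegral_congr fun x => heq x
      _ ≤ ∏ k, (∫⁻ x in B, ENNReal.ofReal (w k x)) ^ θ k :=
          ENNReal.lintegral_prod_norm_pow_le _
            (fun k _ => ((hw k).1.ennreal_ofReal).aemeasurable) hθsum
            (fun k _ => hθ0 k)
      _ = ∏ k, (wtMass (w k) B) ^ θ k := rfl
  -- per-factor bound
  have hk : ∀ k, ((volume B)⁻¹ * wtMass (w k) B) ^ (1 / pk k) *
      apFactor (pk k) (w k) B ≤ ENNReal.ofReal (Ck k) := by
    intro k
    have h := hAk k y r hr
    by_cases h1 : pk k = 1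
    · rw [if_pos h1] at h
      rw [apFactor, if_pos h1, h1]
      simpa [ENNReal.div_eq_inv_mul, mul_comm, ENNReal.rpow_one, div_eq_mul_inv]
        using ENNReal.div_le_of_le_mul h
    · rw [if_neg h1] at h
      exact h
  -- main chain
  have key : ((volume B)⁻¹ * wtMass (nuW p pk w) B) ^ (1 / p) ≤
      ∏ k, ((volume B)⁻¹ * wtMass (w k) B) ^ (1 / pk k) := by
    have hinvsplit : (volume B)⁻¹ = ∏ k, ((volume B)⁻¹) ^ θ k := by
      rw [← ennreal_rpow_finset_sum _ hinv_ne0 hinv_netop, hθsum, ENNReal.rpow_one]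
    calc ((volume B)⁻¹ * wtMass (nuW p pk w) B) ^ (1 / p)
        ≤ ((volume B)⁻¹ * ∏ k, (wtMass (w k) B) ^ θ k) ^ (1 / p) :=
          ENNReal.rpow_le_rpow (mul_le_mul_right hHolder _) (by positivity)
      _ = (∏ k, ((volume B)⁻¹ * wtMass (w k) B) ^ θ k) ^ (1 / p) := by
          congr 1
          calc (volume B)⁻¹ * ∏ k, wtMass (w k) B ^ θ k
              = (∏ k, ((volume B)⁻¹) ^ θ k) * ∏ k, wtMass (w k) B ^ θ k := by
                rw [← hinvsplit]
            _ = ∏ k, ((volume B)⁻¹) ^ θ k * wtMass (w k) B ^ θ k :=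
                (Finset.prod_mul_distrib).symm
            _ = ∏ k, ((volume B)⁻¹ * wtMass (w k) B) ^ θ k :=
                Finset.prod_congr rfl fun k _ =>
                  (ENNReal.mul_rpow_of_nonneg _ _ (hθ0 k)).symm
      _ = ∏ k, (((volume B)⁻¹ * wtMass (w k) B) ^ θ k) ^ (1 / p) :=
          (ENNReal.prod_rpow_of_nonneg (by positivity)).symm
      _ = ∏ k, ((volume B)⁻¹ * wtMass (w k) B) ^ (1 / pk k) := by
          refine Finset.prod_congr rfl fun k _ => ?_
          rw [← ENNReal.rpow_mul]
          congr 1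
          field_simp [hθ, hppos.ne', (hpk0 k).ne']
          exact div_mul_cancel₀ p (hpk0 k).ne'
  calc ((volume B)⁻¹ * wtMass (nuW p pk w) B) ^ (1 / p) *
        ∏ k, apFactor (pk k) (w k) B
      ≤ (∏ k, ((volume B)⁻¹ * wtMass (w k) B) ^ (1 / pk k)) *
        ∏ k, apFactor (pk k) (w k) B := mul_le_mul_left key _
    _ = ∏ k, ((volume B)⁻¹ * wtMass (w k) B) ^ (1 / pk k) *
        apFactor (pk k) (w k) B := (Finset.prod_mul_distrib).symm
    _ ≤ ∏ k, ENNReal.ofReal (Ck k) := Finset.prod_le_prod' fun k _ => hk k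
    _ ≤ ENNReal.ofReal (∏ k, Ck k) := by
        by_cases hC : ∀ k ∈ Finset.univ, (0:ℝ) ≤ Ck k
        · rw [ENNReal.ofReal_prod_of_nonneg hC]
        · push_neg at hC
          obtain ⟨k, _, hk'⟩ := hC
          rw [Finset.prod_eq_zero (Finset.mem_univ k)
            (by simp [ENNReal.ofReal_eq_zero, hk'.le])]
          exact zero_le
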